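/- arXiv:2604.21799 — 3 statements merged into one kernel-verified Lean document; each statement's English description precedes it below -/
import Mathlib

section
/- If P : [0,T] → S^n solves the backward Riccati differential equation Ṗ + P(A+B) + (A+B)ᵀP - QᵀQ - γ⁻²PB₁B₁ᵀP = 0 with P(T) = 0, and η : [0,T] → R^n solves η̇ + [A + B - γ⁻²B₁B₁ᵀP]ᵀη + Pσ = 0 with η(T) = 0, then along any solution x of ẋ = (A+B)x + B₁v + σ, the functional ∫₀ᵀ [γ²|v|² - ⟨QᵀQ x, x⟩] dt equals ⟨P(0)x(0), x(0)⟩ + 2⟨η(0), x(0)⟩ + ∫₀ᵀ [γ²|v + γ⁻²B₁ᵀ(Px + η)|² + 2⟨η, σ⟩ - γ⁻²|B₁ᵀη|²] dt. -/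
open Matrix

lemma dp_shift {k l : ℕ} (M : Matrix (Fin k) (Fin l) ℝ) (w : Fin l → ℝ) (u : Fin k → ℝ) :
    (M.mulVec w) ⬝ᵥ u = w ⬝ᵥ (Mᵀ.mulVec u) := by
  rw [dotProduct_mulVec, vecMul_transpose]

lemma hasDerivAt_dot {k : ℕ} (u w : ℝ → Fin k → ℝ) (u' w' : Fin k → ℝ) (t : ℝ)
    (hu : ∀ i, HasDerivAt (fun s => u s i) (u' i) t)
    (hw : ∀ i, HasDerivAt (fun s => w s i) (w' i) t) :
    HasDerivAt (fun s => (u s) ⬝ᵥ (w s)) (u' ⬝ᵥ w t + u t ⬝ᵥ w') t := by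
  have h : HasDerivAt (fun s => ∑ i, u s i * w s i)
      (∑ i : Fin k, (u' i * w t i + u t i * w' i)) t :=
    HasDerivAt.fun_sum fun i _ => (hu i).mul (hw i)
  simpa [dotProduct, Finset.sum_add_distrib] using h

lemma key_algebra {n m : ℕ} (γ : ℝ) (hγ : γ ≠ 0)
    (a p p' q : Matrix (Fin n) (Fin n) ℝ) (b : Matrix (Fin n) (Fin m) ℝ)
    (y s e e' : Fin n → ℝ) (w : Fin m → ℝ)
    (hp : pᵀ = p)
    (hric : p' + p * a + aᵀ * p - qᵀ * q - (γ ^ 2)⁻¹ • (p * b * bᵀ * p) = 0)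
    (heq : e' + (a - (γ ^ 2)⁻¹ • (b * bᵀ * p))ᵀ.mulVec e + p.mulVec s = 0) :
    γ ^ 2 * ((w + (γ ^ 2)⁻¹ • bᵀ.mulVec (p.mulVec y + e)) ⬝ᵥ
        (w + (γ ^ 2)⁻¹ • bᵀ.mulVec (p.mulVec y + e)))
      + 2 * (e ⬝ᵥ s) - (γ ^ 2)⁻¹ * (bᵀ.mulVec e ⬝ᵥ bᵀ.mulVec e)
      - (γ ^ 2 * (w ⬝ᵥ w) - (qᵀ * q).mulVec y ⬝ᵥ y)
    = (p'.mulVec y + p.mulVec (a.mulVec y + b.mulVec w + s)) ⬝ᵥ y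
      + p.mulVec y ⬝ᵥ (a.mulVec y + b.mulVec w + s)
      + 2 * (e' ⬝ᵥ y + e ⬝ᵥ (a.mulVec y + b.mulVec w + s)) := by
  have hg2 : (γ ^ 2) ≠ 0 := pow_ne_zero 2 hγ
  set c : ℝ := (γ ^ 2)⁻¹ with hcdef
  have hp' : p' = qᵀ * q + c • (p * b * bᵀ * p) - p * a - aᵀ * p := by
    have h2 : p' - (qᵀ * q + c • (p * b * bᵀ * p) - p * a - aᵀ * p) = 0 := by
      rw [← hric]; abel
    exact sub_eq_zero.mp h2
  have htr : (a - c • (b * bᵀ * p))ᵀ = aᵀ - c • (p * (b * bᵀ)) := by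
    rw [transpose_sub, transpose_smul, transpose_mul, transpose_mul, transpose_transpose, hp]
  have he' : e' = -(aᵀ.mulVec e) + c • ((p * (b * bᵀ)).mulVec e) - p.mulVec s := by
    have h2 : e' - (-(aᵀ.mulVec e) + c • ((p * (b * bᵀ)).mulVec e) - p.mulVec s) = 0 := by
      rw [← heq, htr, sub_mulVec, smul_mulVec]; abel
    exact sub_eq_zero.mp h2
  -- abbreviations
  set py : Fin n → ℝ := p.mulVec y with hpy
  set z : Fin m → ℝ := bᵀ.mulVec py with hz
  set u : Fin m → ℝ := bᵀ.mulVec e with hu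
  have A1 : (qᵀ * q).mulVec y ⬝ᵥ y = q.mulVec y ⬝ᵥ q.mulVec y := by
    rw [← mulVec_mulVec, dp_shift, transpose_transpose]
  have A2 : (p * b * bᵀ * p).mulVec y ⬝ᵥ y = z ⬝ᵥ z := by
    rw [← mulVec_mulVec, ← mulVec_mulVec, ← mulVec_mulVec, dp_shift, hp, ← hpy,
      dp_shift, ← hz]
  have A3 : (p * a).mulVec y ⬝ᵥ y = py ⬝ᵥ a.mulVec y := by
    rw [← mulVec_mulVec, dp_shift, hp, ← hpy, dotProduct_comm]
  have A4 : (aᵀ * p).mulVec y ⬝ᵥ y = py ⬝ᵥ a.mulVec y := by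
    rw [← mulVec_mulVec, ← hpy, dp_shift, transpose_transpose, dotProduct_comm]
  have A5 : p.mulVec (a.mulVec y) ⬝ᵥ y = py ⬝ᵥ a.mulVec y := by
    rw [dp_shift, hp, ← hpy, dotProduct_comm]
  have A6 : p.mulVec (b.mulVec w) ⬝ᵥ y = w ⬝ᵥ z := by
    rw [dp_shift, hp, ← hpy, dp_shift, ← hz]
  have A7 : p.mulVec s ⬝ᵥ y = s ⬝ᵥ py := by
    rw [dp_shift, hp, ← hpy]
  have A8 : py ⬝ᵥ b.mulVec w = w ⬝ᵥ z := by
    rw [dotProduct_comm, dp_shift, ← hz]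
  have A10 : aᵀ.mulVec e ⬝ᵥ y = e ⬝ᵥ a.mulVec y := by
    rw [dp_shift, transpose_transpose]
  have A11 : (p * (b * bᵀ)).mulVec e ⬝ᵥ y = u ⬝ᵥ z := by
    rw [← mulVec_mulVec, ← mulVec_mulVec, dp_shift, hp, ← hpy, dp_shift, ← hz, ← hu]
  have A12 : e ⬝ᵥ b.mulVec w = w ⬝ᵥ u := by
    rw [dotProduct_comm e, dp_shift, ← hu]
  have A13 : bᵀ.mulVec (py + e) = z + u := by rw [mulVec_add, ← hz, ← hu]
  rw [hp', he', A13]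
  simp only [mulVec_add, add_mulVec, sub_mulVec, smul_mulVec, add_dotProduct,
    dotProduct_add, sub_dotProduct, dotProduct_sub, smul_dotProduct, dotProduct_smul,
    neg_dotProduct, smul_eq_mul]
  rw [A2, A3, A4, A5, A6, A7, A8, A10, A11, A12, dotProduct_comm py s,
    dotProduct_comm z w, dotProduct_comm u w, dotProduct_comm u z]
  simp only [hcdef]
  field_simp
  ring


/-- Completion-of-squares identity: if `P` solves the backward Riccati equation
`Ṗ + P(A+B) + (A+B)ᵀP - QᵀQ - γ⁻²PB₁B₁ᵀP = 0`, `P(T) = 0`, and `η` solves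
`η̇ + [A+B-γ⁻²B₁B₁ᵀP]ᵀη + Pσ = 0`, `η(T) = 0`, then along any solution `x` of
`ẋ = (A+B)x + B₁v + σ`,
`∫₀ᵀ [γ²|v|² - ⟨QᵀQx,x⟩] dt = ⟨P(0)x(0),x(0)⟩ + 2⟨η(0),x(0)⟩
  + ∫₀ᵀ [γ²|v + γ⁻²B₁ᵀ(Px+η)|² + 2⟨η,σ⟩ - γ⁻²|B₁ᵀη|²] dt`. -/
theorem stmt2 {n m : ℕ} (T γ : ℝ) (hT : 0 < T) (hγ : 0 < γ)
    (A B Q : ℝ → Matrix (Fin n) (Fin n) ℝ) (B₁ : ℝ → Matrix (Fin n) (Fin m) ℝ)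
    (σ : ℝ → Fin n → ℝ) (v : ℝ → Fin m → ℝ) (x : ℝ → Fin n → ℝ)
    (hA : Continuous A) (hB : Continuous B) (hQ : Continuous Q)
    (hB₁ : Continuous B₁) (hσ : Continuous σ) (hv : Continuous v)
    (P P' : ℝ → Matrix (Fin n) (Fin n) ℝ)
    (hPsymm : ∀ t, (P t)ᵀ = P t)
    (hPderiv : ∀ t, ∀ i j, HasDerivAt (fun s => P s i j) (P' t i j) t)
    (hPric : ∀ t, P' t + P t * (A t + B t) + (A t + B t)ᵀ * P t
      - (Q t)ᵀ * Q t - (γ ^ 2)⁻¹ • (P t * B₁ t * (B₁ t)ᵀ * P t) = 0)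
    (hPT : P T = 0)
    (η η' : ℝ → Fin n → ℝ)
    (hηderiv : ∀ t, ∀ i, HasDerivAt (fun s => η s i) (η' t i) t)
    (hηeq : ∀ t, η' t + (A t + B t - (γ ^ 2)⁻¹ • (B₁ t * (B₁ t)ᵀ * P t))ᵀ.mulVec (η t)
      + (P t).mulVec (σ t) = 0)
    (hηT : η T = 0)
    (hx : ∀ t, ∀ i, HasDerivAt (fun s => x s i)
      (((A t + B t).mulVec (x t) + (B₁ t).mulVec (v t) + σ t) i) t) :
    (∫ t in (0:ℝ)..T, (γ ^ 2 * dotProduct (v t) (v t)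
        - dotProduct (((Q t)ᵀ * Q t).mulVec (x t)) (x t))) =
      dotProduct ((P 0).mulVec (x 0)) (x 0) + 2 * dotProduct (η 0) (x 0)
      + ∫ t in (0:ℝ)..T,
          (γ ^ 2 * dotProduct
              (v t + (γ ^ 2)⁻¹ • (B₁ t)ᵀ.mulVec ((P t).mulVec (x t) + η t))
              (v t + (γ ^ 2)⁻¹ • (B₁ t)ᵀ.mulVec ((P t).mulVec (x t) + η t))
            + 2 * dotProduct (η t) (σ t)
            - (γ ^ 2)⁻¹ * dotProduct ((B₁ t)ᵀ.mulVec (η t)) ((B₁ t)ᵀ.mulVec (η t))) := by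
  have hγ0 : γ ≠ 0 := ne_of_gt hγ
  set xd : ℝ → Fin n → ℝ :=
    fun t => (A t + B t).mulVec (x t) + (B₁ t).mulVec (v t) + σ t with hxd
  set F : ℝ → ℝ := fun t => ((P t).mulVec (x t)) ⬝ᵥ x t + 2 * (η t ⬝ᵥ x t) with hF
  set G : ℝ → ℝ := fun t =>
    ((P' t).mulVec (x t) + (P t).mulVec (xd t)) ⬝ᵥ x t
      + (P t).mulVec (x t) ⬝ᵥ xd t + 2 * ((η' t) ⬝ᵥ x t + η t ⬝ᵥ xd t) with hG
  set lhsf : ℝ → ℝ := fun t => γ ^ 2 * dotProduct (v t) (v t)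
      - dotProduct (((Q t)ᵀ * Q t).mulVec (x t)) (x t) with hlhsf
  set rhsf : ℝ → ℝ := fun t =>
      γ ^ 2 * dotProduct
        (v t + (γ ^ 2)⁻¹ • (B₁ t)ᵀ.mulVec ((P t).mulVec (x t) + η t))
        (v t + (γ ^ 2)⁻¹ • (B₁ t)ᵀ.mulVec ((P t).mulVec (x t) + η t))
      + 2 * dotProduct (η t) (σ t)
      - (γ ^ 2)⁻¹ * dotProduct ((B₁ t)ᵀ.mulVec (η t)) ((B₁ t)ᵀ.mulVec (η t)) with hrhsf
  -- derivative of F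
  have hFderiv : ∀ t, HasDerivAt F (G t) t := by
    intro t
    have h1 : ∀ i, HasDerivAt (fun s => (P s).mulVec (x s) i)
        (((P' t).mulVec (x t) + (P t).mulVec (xd t)) i) t := by
      intro i
      have h : HasDerivAt (fun s => ∑ j, P s i j * x s j)
          (∑ j : Fin n, (P' t i j * x t j + P t i j * xd t j)) t :=
        HasDerivAt.fun_sum fun j _ => (hPderiv t i j).mul (hx t j)
      simpa [mulVec, dotProduct, Finset.sum_add_distrib] using h
    have h2 := hasDerivAt_dot (fun s => (P s).mulVec (x s)) x
      ((P' t).mulVec (x t) + (P t).mulVec (xd t)) (xd t) t h1 (hx t)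
    have h3 := (hasDerivAt_dot η x (η' t) (xd t) t (hηderiv t) (hx t)).const_mul 2
    simpa [hF, hG] using h2.fun_add h3
  -- continuity
  have hxc : Continuous x := continuous_pi fun i =>
    continuous_iff_continuousAt.mpr fun t => (hx t i).continuousAt
  have hPc : Continuous P := continuous_pi fun i => continuous_pi fun j =>
    continuous_iff_continuousAt.mpr fun t => (hPderiv t i j).continuousAt
  have hhc : Continuous η := continuous_pi fun i =>
    continuous_iff_continuousAt.mpr fun t => (hηderiv t i).continuousAt
  have hlc : Continuous lhsf := by
    rw [hlhsf]
    exact (continuous_const.mul (hv.dotProduct hv)).sub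
      (((hQ.matrix_transpose.matrix_mul hQ).matrix_mulVec hxc).dotProduct hxc)
  have hrc : Continuous rhsf := by
    rw [hrhsf]
    have hbe : Continuous fun t => (B₁ t)ᵀ.mulVec (η t) := hB₁.matrix_transpose.matrix_mulVec hhc
    have hsq : Continuous fun t => v t + (γ ^ 2)⁻¹ • (B₁ t)ᵀ.mulVec ((P t).mulVec (x t) + η t) :=
      hv.add ((hB₁.matrix_transpose.matrix_mulVec ((hPc.matrix_mulVec hxc).add hhc)).fun_const_smul _)
    exact ((continuous_const.mul (hsq.dotProduct hsq)).add
      (continuous_const.mul (hhc.dotProduct hσ))).sub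
      (continuous_const.mul (hbe.dotProduct hbe))
  -- pointwise identity
  have hkey : ∀ t, rhsf t - lhsf t = G t := by
    intro t
    have h := key_algebra γ hγ0 (A t + B t) (P t) (P' t) (Q t) (B₁ t)
      (x t) (σ t) (η t) (η' t) (v t) (hPsymm t) (hPric t) (hηeq t)
    simpa [hlhsf, hrhsf, hG, hxd] using h
  -- FTC
  have hFT : F T = 0 := by simp [hF, hPT, hηT]
  have hint : IntervalIntegrable (fun t => rhsf t - lhsf t) MeasureTheory.volume 0 T :=
    (hrc.sub hlc).intervalIntegrable 0 T
  have hftc : (∫ t in (0:ℝ)..T, (rhsf t - lhsf t)) = F T - F 0 :=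
    intervalIntegral.integral_eq_sub_of_hasDerivAt
      (fun t _ => by rw [hkey t]; exact hFderiv t) hint
  have hsub : (∫ t in (0:ℝ)..T, (rhsf t - lhsf t))
      = (∫ t in (0:ℝ)..T, rhsf t) - ∫ t in (0:ℝ)..T, lhsf t :=
    intervalIntegral.integral_sub (hrc.intervalIntegrable 0 T) (hlc.intervalIntegrable 0 T)
  have hF0 : F 0 = dotProduct ((P 0).mulVec (x 0)) (x 0) + 2 * dotProduct (η 0) (x 0) := rfl
  have hfin : (∫ t in (0:ℝ)..T, lhsf t) = F 0 + ∫ t in (0:ℝ)..T, rhsf t := by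
    rw [hsub, hFT] at hftc; linarith
  rw [← hF0]
  exact hfin
end

section
/- Under the hypotheses of the completion-of-squares identity, the disturbance v*(t) = -γ⁻²B₁(t)ᵀ[P(t)x(t) + η(t)] minimizes the functional v ↦ ∫₀ᵀ [γ²|v(t)|² - ⟨Q(t)ᵀQ(t)x^v(t), x^v(t)⟩] dt over all continuous disturbances, where x^v denotes the solution of ẋ = (A+B)x + B₁v + σ with fixed initial condition x(0) = x₀, and the minimal value is ⟨P(0)x₀, x₀⟩ + 2⟨η(0), x₀⟩ + ∫₀ᵀ [2⟨η, σ⟩ - γ⁻²|B₁ᵀη|²] dt. -/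
open Matrix


lemma tmv {n m : ℕ} (M : Matrix (Fin n) (Fin m) ℝ) (u : Fin n → ℝ) (w : Fin m → ℝ) :
    (Mᵀ *ᵥ u) ⬝ᵥ w = u ⬝ᵥ (M *ᵥ w) := by
  rw [Matrix.mulVec_transpose, ← Matrix.dotProduct_mulVec]

lemma alg {n m : ℕ} (γ : ℝ) (hγ : γ ≠ 0)
    (p p' a q : Matrix (Fin n) (Fin n) ℝ) (b1 : Matrix (Fin n) (Fin m) ℝ)
    (hps : pᵀ = p)
    (x e e' s : Fin n → ℝ) (v : Fin m → ℝ)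
    (hric : p' + p * a + aᵀ * p - qᵀ * q - (γ ^ 2)⁻¹ • (p * b1 * b1ᵀ * p) = 0)
    (he : e' + (a - (γ ^ 2)⁻¹ • (b1 * b1ᵀ * p))ᵀ *ᵥ e + p *ᵥ s = 0)
    (x' : Fin n → ℝ) (hx' : x' = a *ᵥ x + b1 *ᵥ v + s)
    (w : Fin m → ℝ) (hw : w = v + (γ ^ 2)⁻¹ • (b1ᵀ *ᵥ (p *ᵥ x + e))) :
    -((p' *ᵥ x + p *ᵥ x') ⬝ᵥ x + (p *ᵥ x) ⬝ᵥ x' + 2 * (e' ⬝ᵥ x + e ⬝ᵥ x'))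
      = γ ^ 2 * (v ⬝ᵥ v) - ((qᵀ * q) *ᵥ x) ⬝ᵥ x - γ ^ 2 * (w ⬝ᵥ w)
        - (2 * (e ⬝ᵥ s) - (γ ^ 2)⁻¹ * ((b1ᵀ *ᵥ e) ⬝ᵥ (b1ᵀ *ᵥ e))) := by
  have hp' : p' = qᵀ * q + (γ ^ 2)⁻¹ • (p * b1 * b1ᵀ * p) - p * a - aᵀ * p := by
    have h := hric
    have : p' = p' + p * a + aᵀ * p - qᵀ * q - (γ ^ 2)⁻¹ • (p * b1 * b1ᵀ * p)
        + ((γ ^ 2)⁻¹ • (p * b1 * b1ᵀ * p) + qᵀ * q - p * a - aᵀ * p) := by abel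
    rw [this, h]; abel
  have he' : e' = -( (a - (γ ^ 2)⁻¹ • (b1 * b1ᵀ * p))ᵀ *ᵥ e) - p *ᵥ s := by
    have h := he
    have : e' = e' + (a - (γ ^ 2)⁻¹ • (b1 * b1ᵀ * p))ᵀ *ᵥ e + p *ᵥ s
        + (-((a - (γ ^ 2)⁻¹ • (b1 * b1ᵀ * p))ᵀ *ᵥ e) - p *ᵥ s) := by abel
    rw [this, h]; abel
  subst hp' he' hx' hw
  simp only [Matrix.add_mulVec, Matrix.sub_mulVec, Matrix.smul_mulVec,
    Matrix.mulVec_add, Matrix.mulVec_smul, ← Matrix.mulVec_mulVec,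
    Matrix.transpose_sub, Matrix.transpose_smul, Matrix.transpose_mul,
    Matrix.transpose_transpose, hps,
    dotProduct_add, add_dotProduct, dotProduct_sub, sub_dotProduct,
    dotProduct_smul, smul_dotProduct, neg_dotProduct, dotProduct_neg,
    smul_eq_mul]
  have psym : ∀ (u w : Fin n → ℝ), (p *ᵥ u) ⬝ᵥ w = u ⬝ᵥ (p *ᵥ w) := by
    intro u w; conv_lhs => rw [← hps]
    exact tmv p u w
  have aadj : ∀ (u w : Fin n → ℝ), (aᵀ *ᵥ u) ⬝ᵥ w = u ⬝ᵥ (a *ᵥ w) := fun u w => tmv a u w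
  have qadj : ∀ (u w : Fin n → ℝ), (qᵀ *ᵥ u) ⬝ᵥ w = u ⬝ᵥ (q *ᵥ w) := fun u w => tmv q u w
  have b1adj : ∀ (u : Fin m → ℝ) (w : Fin n → ℝ), (b1 *ᵥ u) ⬝ᵥ w = u ⬝ᵥ (b1ᵀ *ᵥ w) := by
    intro u w; rw [← Matrix.transpose_transpose b1, tmv, Matrix.transpose_transpose]
  have db1 : ∀ (u : Fin n → ℝ) (w : Fin m → ℝ), u ⬝ᵥ (b1 *ᵥ w) = w ⬝ᵥ (b1ᵀ *ᵥ u) := by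
    intro u w; rw [dotProduct_comm, b1adj]
  have psym2 : ∀ (u w : Fin n → ℝ), u ⬝ᵥ p *ᵥ w = w ⬝ᵥ p *ᵥ u := by
    intro u w; rw [← psym, dotProduct_comm]
  simp only [psym, aadj, qadj, b1adj, db1]
  simp only [psym2, dotProduct_comm]
  field_simp
  rw [show (p *ᵥ x) ⬝ᵥ (b1 *ᵥ v) = v ⬝ᵥ ((b1ᵀ * p) *ᵥ x) by
    rw [db1, Matrix.mulVec_mulVec]]
  simp only [← Matrix.mulVec_mulVec]
  ring

lemma hd_dot {n : ℕ} {f g : ℝ → Fin n → ℝ} {f' g' : Fin n → ℝ} {t : ℝ}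
    (hf : ∀ i, HasDerivAt (fun s => f s i) (f' i) t)
    (hg : ∀ i, HasDerivAt (fun s => g s i) (g' i) t) :
    HasDerivAt (fun s => f s ⬝ᵥ g s) (f' ⬝ᵥ g t + f t ⬝ᵥ g' ) t := by
  have h : HasDerivAt (fun s => ∑ i, f s i * g s i)
      (∑ i : Fin n, (f' i * g t i + f t i * g' i)) t :=
    HasDerivAt.fun_sum (fun i _ => (hf i).mul (hg i))
  simpa [dotProduct, Finset.sum_add_distrib] using h

lemma hd_mulVec {n k : ℕ} {M : ℝ → Matrix (Fin n) (Fin k) ℝ}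
    {M' : Matrix (Fin n) (Fin k) ℝ} {x : ℝ → Fin k → ℝ} {x' : Fin k → ℝ} {t : ℝ}
    (hM : ∀ i j, HasDerivAt (fun s => M s i j) (M' i j) t)
    (hx : ∀ j, HasDerivAt (fun s => x s j) (x' j) t) (i : Fin n) :
    HasDerivAt (fun s => (M s *ᵥ x s) i) ((M' *ᵥ x t + M t *ᵥ x') i) t := by
  have h := hd_dot (f := fun s => M s i) (g := x) (f' := M' i) (g' := x')
    (fun j => hM i j) hx
  simpa [Matrix.mulVec, Pi.add_apply] using h

lemma cont_dot {k : ℕ} {f g : ℝ → Fin k → ℝ} (hf : Continuous f) (hg : Continuous g) :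
    Continuous (fun t => f t ⬝ᵥ g t) := by
  simp only [dotProduct]
  exact continuous_finset_sum _ fun i _ =>
    ((continuous_apply i).comp hf).mul ((continuous_apply i).comp hg)

lemma cont_mulVec {n k : ℕ} {M : ℝ → Matrix (Fin n) (Fin k) ℝ} {x : ℝ → Fin k → ℝ}
    (hM : Continuous M) (hx : Continuous x) :
    Continuous (fun t => M t *ᵥ x t) := by
  refine continuous_pi fun i => ?_
  have : Continuous (fun t => M t i) := (continuous_apply i).comp hM
  simpa [Matrix.mulVec] using cont_dot this hx

lemma cont_transpose {n k : ℕ} {M : ℝ → Matrix (Fin n) (Fin k) ℝ} (hM : Continuous M) :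
    Continuous (fun t => (M t)ᵀ) := by
  refine continuous_pi fun j => continuous_pi fun i => ?_
  exact (continuous_apply j).comp ((continuous_apply i).comp hM)

lemma key {n m : ℕ} (T γ : ℝ) (hT : 0 < T) (hγ : 0 < γ)
    (A B Q : ℝ → Matrix (Fin n) (Fin n) ℝ) (B₁ : ℝ → Matrix (Fin n) (Fin m) ℝ)
    (σ : ℝ → Fin n → ℝ) (x₀ : Fin n → ℝ)
    (hA : Continuous A) (hB : Continuous B) (hQ : Continuous Q)
    (hB₁ : Continuous B₁) (hσ : Continuous σ)
    (P P' : ℝ → Matrix (Fin n) (Fin n) ℝ)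
    (hPsymm : ∀ t, (P t)ᵀ = P t)
    (hPderiv : ∀ t, ∀ i j, HasDerivAt (fun s => P s i j) (P' t i j) t)
    (hPric : ∀ t, P' t + P t * (A t + B t) + (A t + B t)ᵀ * P t
      - (Q t)ᵀ * Q t - (γ ^ 2)⁻¹ • (P t * B₁ t * (B₁ t)ᵀ * P t) = 0)
    (hPT : P T = 0)
    (η η' : ℝ → Fin n → ℝ)
    (hηderiv : ∀ t, ∀ i, HasDerivAt (fun s => η s i) (η' t i) t)
    (hηeq : ∀ t, η' t + (A t + B t - (γ ^ 2)⁻¹ • (B₁ t * (B₁ t)ᵀ * P t))ᵀ.mulVec (η t)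
      + (P t).mulVec (σ t) = 0)
    (hηT : η T = 0)
    (v : ℝ → Fin m → ℝ) (xv : ℝ → Fin n → ℝ) (hv : Continuous v) (hxv0 : xv 0 = x₀)
    (hode : ∀ t, ∀ i, HasDerivAt (fun s => xv s i)
        (((A t + B t).mulVec (xv t) + (B₁ t).mulVec (v t) + σ t) i) t) :
    (∫ t in (0:ℝ)..T, (γ ^ 2 * dotProduct (v t) (v t)
        - dotProduct (((Q t)ᵀ * Q t).mulVec (xv t)) (xv t)))
    = dotProduct ((P 0).mulVec x₀) x₀ + 2 * dotProduct (η 0) x₀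
      + (∫ t in (0:ℝ)..T, γ ^ 2 *
          ((v t + (γ ^ 2)⁻¹ • ((B₁ t)ᵀ *ᵥ (P t *ᵥ xv t + η t))) ⬝ᵥ
           (v t + (γ ^ 2)⁻¹ • ((B₁ t)ᵀ *ᵥ (P t *ᵥ xv t + η t)))))
      + ∫ t in (0:ℝ)..T, (2 * dotProduct (η t) (σ t)
          - (γ ^ 2)⁻¹ * dotProduct ((B₁ t)ᵀ.mulVec (η t)) ((B₁ t)ᵀ.mulVec (η t))) := by
  -- continuity facts
  have contP : Continuous P := continuous_pi fun i => continuous_pi fun j =>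
    Differentiable.continuous (fun t => (hPderiv t i j).differentiableAt)
  have contη : Continuous η := continuous_pi fun i =>
    Differentiable.continuous (fun t => (hηderiv t i).differentiableAt)
  have contxv : Continuous xv := continuous_pi fun i =>
    Differentiable.continuous (fun t => (hode t i).differentiableAt)
  have contAB : Continuous (fun t => A t + B t) := hA.add hB
  set w : ℝ → Fin m → ℝ :=
    fun t => v t + (γ ^ 2)⁻¹ • ((B₁ t)ᵀ *ᵥ (P t *ᵥ xv t + η t)) with hwdef
  have contw : Continuous w := by
    apply hv.add
    exact ((cont_mulVec (cont_transpose hB₁)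
      ((cont_mulVec contP contxv).add contη)).const_smul ((γ ^ 2)⁻¹ : ℝ))
  set g : ℝ → ℝ := fun t => 2 * (η t ⬝ᵥ σ t)
      - (γ ^ 2)⁻¹ * ((B₁ t)ᵀ *ᵥ η t ⬝ᵥ (B₁ t)ᵀ *ᵥ η t) with hgdef
  have contg : Continuous g := by
    apply Continuous.sub
    · exact (continuous_const.mul (cont_dot contη hσ))
    · exact continuous_const.mul (cont_dot (cont_mulVec (cont_transpose hB₁) contη)
        (cont_mulVec (cont_transpose hB₁) contη))
  set F : ℝ → ℝ := fun t => γ ^ 2 * (v t ⬝ᵥ v t) - ((Q t)ᵀ * Q t) *ᵥ xv t ⬝ᵥ xv t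
      - γ ^ 2 * (w t ⬝ᵥ w t) - g t with hFdef
  have contQQ : Continuous (fun t => (Q t)ᵀ * Q t) := by
    refine continuous_pi fun i => continuous_pi fun j => ?_
    simp only [Matrix.mul_apply]
    exact continuous_finset_sum _ fun k _ =>
      (((continuous_apply i).comp ((continuous_apply k).comp hQ)).mul
        ((continuous_apply j).comp ((continuous_apply k).comp hQ)))
  have contF : Continuous F := by
    refine ((((continuous_const.mul (cont_dot hv hv)).sub
      (cont_dot (cont_mulVec contQQ contxv) contxv)).sub
      (continuous_const.mul (cont_dot contw contw))).sub contg)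
  -- the Lyapunov-type function and its derivative
  set W : ℝ → ℝ := fun s => (P s *ᵥ xv s) ⬝ᵥ xv s + 2 * (η s ⬝ᵥ xv s) with hWdef
  have hderiv : ∀ t, HasDerivAt (fun s => -W s) (F t) t := by
    intro t
    set xv' : Fin n → ℝ := (A t + B t) *ᵥ xv t + B₁ t *ᵥ v t + σ t with hxv'
    have hx : ∀ i, HasDerivAt (fun s => xv s i) (xv' i) t := fun i => hode t i
    have h1 : HasDerivAt (fun s => (P s *ᵥ xv s) ⬝ᵥ xv s)
        ((P' t *ᵥ xv t + P t *ᵥ xv') ⬝ᵥ xv t + (P t *ᵥ xv t) ⬝ᵥ xv') t :=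
      hd_dot (fun i => hd_mulVec (hPderiv t) hx i) hx
    have h2 : HasDerivAt (fun s => 2 * (η s ⬝ᵥ xv s))
        (2 * (η' t ⬝ᵥ xv t + η t ⬝ᵥ xv')) t :=
      (hd_dot (fun i => hηderiv t i) hx).const_mul 2
    have hW' : HasDerivAt W
        ((P' t *ᵥ xv t + P t *ᵥ xv') ⬝ᵥ xv t + (P t *ᵥ xv t) ⬝ᵥ xv'
          + 2 * (η' t ⬝ᵥ xv t + η t ⬝ᵥ xv')) t := h1.add h2
    have halg := alg γ hγ.ne' (P t) (P' t) (A t + B t) (Q t) (B₁ t) (hPsymm t)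
      (xv t) (η t) (η' t) (σ t) (v t) (hPric t) (hηeq t) xv' rfl (w t) rfl
    have := hW'.neg
    rw [show -((P' t *ᵥ xv t + P t *ᵥ xv') ⬝ᵥ xv t + (P t *ᵥ xv t) ⬝ᵥ xv'
          + 2 * (η' t ⬝ᵥ xv t + η t ⬝ᵥ xv')) = F t by rw [hFdef]; rw [halg]] at this
    exact this
  -- FTC
  have hint : ∫ t in (0:ℝ)..T, F t = W 0 := by
    rw [intervalIntegral.integral_eq_sub_of_hasDerivAt
      (fun t _ => hderiv t) (contF.intervalIntegrable 0 T)]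
    have hWT : W T = 0 := by simp [hWdef, hPT, hηT]
    simp [hWT]
  have hW0 : W 0 = (P 0).mulVec x₀ ⬝ᵥ x₀ + 2 * (η 0 ⬝ᵥ x₀) := by
    simp [hWdef, hxv0]
  -- split the integral
  have hsplit : ∀ t, γ ^ 2 * (v t ⬝ᵥ v t) - ((Q t)ᵀ * Q t) *ᵥ xv t ⬝ᵥ xv t
      = F t + γ ^ 2 * (w t ⬝ᵥ w t) + g t := by
    intro t; simp only [hFdef]; ring
  have hiF : IntervalIntegrable F MeasureTheory.volume 0 T := contF.intervalIntegrable 0 T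
  have hiw : IntervalIntegrable (fun t => γ ^ 2 * (w t ⬝ᵥ w t)) MeasureTheory.volume 0 T :=
    (continuous_const.mul (cont_dot contw contw)).intervalIntegrable 0 T
  have hig : IntervalIntegrable g MeasureTheory.volume 0 T := contg.intervalIntegrable 0 T
  calc (∫ t in (0:ℝ)..T, (γ ^ 2 * dotProduct (v t) (v t)
        - dotProduct (((Q t)ᵀ * Q t).mulVec (xv t)) (xv t)))
      = ∫ t in (0:ℝ)..T, (F t + γ ^ 2 * (w t ⬝ᵥ w t) + g t) := by
        apply intervalIntegral.integral_congr; intro t _; exact hsplit t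
    _ = (∫ t in (0:ℝ)..T, F t) + (∫ t in (0:ℝ)..T, γ ^ 2 * (w t ⬝ᵥ w t))
        + ∫ t in (0:ℝ)..T, g t := by
        rw [intervalIntegral.integral_add (hiF.add hiw) hig,
          intervalIntegral.integral_add hiF hiw]
    _ = _ := by rw [hint, hW0]


/-- Under the completion-of-squares hypotheses, the disturbance
`v*(t) = -γ⁻²B₁ᵀ[Px*(t) + η(t)]` minimizes
`v ↦ ∫₀ᵀ [γ²|v|² - ⟨QᵀQ xᵛ, xᵛ⟩] dt` over continuous disturbances (with solutions
starting at `x₀`), and the minimal value is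
`⟨P(0)x₀,x₀⟩ + 2⟨η(0),x₀⟩ + ∫₀ᵀ [2⟨η,σ⟩ - γ⁻²|B₁ᵀη|²] dt`. -/
theorem stmt3 {n m : ℕ} (T γ : ℝ) (hT : 0 < T) (hγ : 0 < γ)
    (A B Q : ℝ → Matrix (Fin n) (Fin n) ℝ) (B₁ : ℝ → Matrix (Fin n) (Fin m) ℝ)
    (σ : ℝ → Fin n → ℝ) (x₀ : Fin n → ℝ)
    (hA : Continuous A) (hB : Continuous B) (hQ : Continuous Q)
    (hB₁ : Continuous B₁) (hσ : Continuous σ)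
    (P P' : ℝ → Matrix (Fin n) (Fin n) ℝ)
    (hPsymm : ∀ t, (P t)ᵀ = P t)
    (hPderiv : ∀ t, ∀ i j, HasDerivAt (fun s => P s i j) (P' t i j) t)
    (hPric : ∀ t, P' t + P t * (A t + B t) + (A t + B t)ᵀ * P t
      - (Q t)ᵀ * Q t - (γ ^ 2)⁻¹ • (P t * B₁ t * (B₁ t)ᵀ * P t) = 0)
    (hPT : P T = 0)
    (η η' : ℝ → Fin n → ℝ)
    (hηderiv : ∀ t, ∀ i, HasDerivAt (fun s => η s i) (η' t i) t)
    (hηeq : ∀ t, η' t + (A t + B t - (γ ^ 2)⁻¹ • (B₁ t * (B₁ t)ᵀ * P t))ᵀ.mulVec (η t)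
      + (P t).mulVec (σ t) = 0)
    (hηT : η T = 0)
    -- the candidate worst-case disturbance and its closed-loop trajectory
    (xstar : ℝ → Fin n → ℝ) (vstar : ℝ → Fin m → ℝ)
    (hvstar : ∀ t, vstar t = -((γ ^ 2)⁻¹ • (B₁ t)ᵀ.mulVec ((P t).mulVec (xstar t) + η t)))
    (hxstar0 : xstar 0 = x₀)
    (hxstar : ∀ t, ∀ i, HasDerivAt (fun s => xstar s i)
      (((A t + B t).mulVec (xstar t) + (B₁ t).mulVec (vstar t) + σ t) i) t) :
    (∀ (v : ℝ → Fin m → ℝ) (xv : ℝ → Fin n → ℝ), Continuous v → xv 0 = x₀ →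
      (∀ t, ∀ i, HasDerivAt (fun s => xv s i)
        (((A t + B t).mulVec (xv t) + (B₁ t).mulVec (v t) + σ t) i) t) →
      (∫ t in (0:ℝ)..T, (γ ^ 2 * dotProduct (vstar t) (vstar t)
          - dotProduct (((Q t)ᵀ * Q t).mulVec (xstar t)) (xstar t))) ≤
      (∫ t in (0:ℝ)..T, (γ ^ 2 * dotProduct (v t) (v t)
          - dotProduct (((Q t)ᵀ * Q t).mulVec (xv t)) (xv t)))) ∧
    (∫ t in (0:ℝ)..T, (γ ^ 2 * dotProduct (vstar t) (vstar t)
        - dotProduct (((Q t)ᵀ * Q t).mulVec (xstar t)) (xstar t))) =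
      dotProduct ((P 0).mulVec x₀) x₀ + 2 * dotProduct (η 0) x₀
      + ∫ t in (0:ℝ)..T, (2 * dotProduct (η t) (σ t)
          - (γ ^ 2)⁻¹ * dotProduct ((B₁ t)ᵀ.mulVec (η t)) ((B₁ t)ᵀ.mulVec (η t))) := by
  have contP : Continuous P := continuous_pi fun i => continuous_pi fun j =>
    Differentiable.continuous (fun t => (hPderiv t i j).differentiableAt)
  have contη : Continuous η := continuous_pi fun i =>
    Differentiable.continuous (fun t => (hηderiv t i).differentiableAt)
  have contxstar : Continuous xstar := continuous_pi fun i =>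
    Differentiable.continuous (fun t => (hxstar t i).differentiableAt)
  have contvstar : Continuous vstar := by
    have hveq : vstar = fun t => -((γ ^ 2)⁻¹ •
        ((B₁ t)ᵀ *ᵥ (P t *ᵥ xstar t + η t))) := funext hvstar
    rw [hveq]
    exact ((cont_mulVec (cont_transpose hB₁)
      ((cont_mulVec contP contxstar).add contη)).const_smul ((γ ^ 2)⁻¹ : ℝ)).neg
  have hwz : ∀ t, vstar t + (γ ^ 2)⁻¹ • ((B₁ t)ᵀ *ᵥ (P t *ᵥ xstar t + η t)) = 0 := by
    intro t; rw [hvstar t]; simp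
  have keystar := key T γ hT hγ A B Q B₁ σ x₀ hA hB hQ hB₁ hσ P P' hPsymm hPderiv
    hPric hPT η η' hηderiv hηeq hηT vstar xstar contvstar hxstar0 hxstar
  have hmidz : (∫ t in (0:ℝ)..T, γ ^ 2 *
      ((vstar t + (γ ^ 2)⁻¹ • ((B₁ t)ᵀ *ᵥ (P t *ᵥ xstar t + η t))) ⬝ᵥ
       (vstar t + (γ ^ 2)⁻¹ • ((B₁ t)ᵀ *ᵥ (P t *ᵥ xstar t + η t))))) = 0 := by
    have : ∀ t, γ ^ 2 *
        ((vstar t + (γ ^ 2)⁻¹ • ((B₁ t)ᵀ *ᵥ (P t *ᵥ xstar t + η t))) ⬝ᵥ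
         (vstar t + (γ ^ 2)⁻¹ • ((B₁ t)ᵀ *ᵥ (P t *ᵥ xstar t + η t))))
        = 0 := by intro t; rw [hwz t]; simp
    simp only [this, intervalIntegral.integral_zero]
  have heq : (∫ t in (0:ℝ)..T, (γ ^ 2 * dotProduct (vstar t) (vstar t)
        - dotProduct (((Q t)ᵀ * Q t).mulVec (xstar t)) (xstar t))) =
      dotProduct ((P 0).mulVec x₀) x₀ + 2 * dotProduct (η 0) x₀
      + ∫ t in (0:ℝ)..T, (2 * dotProduct (η t) (σ t)
          - (γ ^ 2)⁻¹ * dotProduct ((B₁ t)ᵀ.mulVec (η t)) ((B₁ t)ᵀ.mulVec (η t))) := by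
    rw [keystar, hmidz]; ring
  refine ⟨?_, heq⟩
  intro v xv hv hxv0 hode
  have keyv := key T γ hT hγ A B Q B₁ σ x₀ hA hB hQ hB₁ hσ P P' hPsymm hPderiv
    hPric hPT η η' hηderiv hηeq hηT v xv hv hxv0 hode
  rw [heq, keyv]
  have hnn : 0 ≤ ∫ t in (0:ℝ)..T, γ ^ 2 *
      ((v t + (γ ^ 2)⁻¹ • ((B₁ t)ᵀ *ᵥ (P t *ᵥ xv t + η t))) ⬝ᵥ
       (v t + (γ ^ 2)⁻¹ • ((B₁ t)ᵀ *ᵥ (P t *ᵥ xv t + η t)))) := by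
    apply intervalIntegral.integral_nonneg hT.le
    intro t _
    apply mul_nonneg (sq_nonneg γ)
    simp only [dotProduct]
    exact Finset.sum_nonneg fun i _ => mul_self_nonneg _
  linarith
end

section
/- Let Σ : [0,T] → S^n solve Σ̇ = AΣ + ΣAᵀ + CCᵀ + DDᵀ - KHKᵀ with K = (ΣEᵀ + CFᵀ)H⁻¹ and H = FFᵀ, and suppose Σ(0) is positive semidefinite. Then Σ̇ can be rewritten as Σ̇ = (A - CF⁻¹E)Σ + Σ(A - CF⁻¹E)ᵀ - ΣEᵀH⁻¹EΣ + DDᵀ, and Σ(t) is positive semidefinite for all t ∈ [0,T]. -/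
open Matrix Real Filter Topology Set

private lemma dp_self_nonneg {n : ℕ} (v : Fin n → ℝ) : 0 ≤ v ⬝ᵥ v :=
  Finset.sum_nonneg fun _ _ => mul_self_nonneg _

private lemma hasDerivAt_quadform {n : ℕ} (M M' : ℝ → Matrix (Fin n) (Fin n) ℝ) (t : ℝ)
    (h : ∀ i j, HasDerivAt (fun s => M s i j) (M' t i j) t) (x y : Fin n → ℝ) :
    HasDerivAt (fun s => x ⬝ᵥ (M s) *ᵥ y) (x ⬝ᵥ (M' t) *ᵥ y) t := by
  simp only [dotProduct, mulVec]
  apply HasDerivAt.fun_sum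
  intro i _
  exact ((HasDerivAt.fun_sum (fun j _ => (h i j).mul_const (y j))).const_mul (x i))

private lemma psd_kernel {n : ℕ} (S : Matrix (Fin n) (Fin n) ℝ) (hsym : Sᵀ = S)
    (hpsd : ∀ y, 0 ≤ y ⬝ᵥ S *ᵥ y) (x : Fin n → ℝ) (hx : x ⬝ᵥ S *ᵥ x = 0) :
    S *ᵥ x = 0 := by
  have hb : ∀ y : Fin n → ℝ, y ⬝ᵥ S *ᵥ x = 0 := by
    intro y
    by_contra hbne
    set a := y ⬝ᵥ S *ᵥ y with ha
    set b := y ⬝ᵥ S *ᵥ x with hbd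
    have hsy : x ⬝ᵥ S *ᵥ y = b := by
      rw [hbd, Matrix.dotProduct_mulVec, ← Matrix.mulVec_transpose, hsym,
        dotProduct_comm]
    have ha0 : 0 ≤ a := hpsd y
    set s : ℝ := (a + 1)⁻¹ with hs
    have hs0 : 0 < s := by positivity
    have key := hpsd (x + (-b * s) • y)
    have hexp : (x + (-b * s) • y) ⬝ᵥ S *ᵥ (x + (-b * s) • y)
        = b ^ 2 * s * (s * a - 2) := by
      simp only [Matrix.mulVec_add, Matrix.mulVec_smul, dotProduct_add,
        add_dotProduct, smul_dotProduct, dotProduct_smul,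
        smul_eq_mul, hx, hsy, ← ha, ← hbd]
      ring
    rw [hexp] at key
    have hsa : s * a < 2 := by
      have : s * a < 1 := by
        rw [hs]
        rw [inv_mul_lt_iff₀ (by positivity)]
        linarith
      linarith
    have hb2 : 0 < b ^ 2 := lt_of_le_of_ne (sq_nonneg b) (Ne.symm (pow_ne_zero 2 hbne))
    have hp : 0 < b ^ 2 * s * (2 - s * a) := by
      apply mul_pos (mul_pos hb2 hs0); linarith
    have hneg : b ^ 2 * s * (s * a - 2) = -(b ^ 2 * s * (2 - s * a)) := by ring
    linarith
  funext i
  have := hb (Pi.single i 1)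
  simpa [single_dotProduct] using this

private lemma entry_cont {n m : ℕ} {α : Type*} [TopologicalSpace α]
    {G : α → Matrix (Fin n) (Fin m) ℝ} (hG : Continuous G) (i : Fin n) (j : Fin m) :
    Continuous fun a => G a i j :=
  ((continuous_apply j).comp ((continuous_apply i).comp hG))

private lemma quad_cont_joint {n : ℕ} {G : ℝ → Matrix (Fin n) (Fin n) ℝ}
    (hG : Continuous G) :
    Continuous fun z : ℝ × (Fin n → ℝ) => z.2 ⬝ᵥ (G z.1) *ᵥ z.2 := by
  simp only [dotProduct, mulVec]
  apply continuous_finset_sum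
  intro i _
  exact (((continuous_apply i).comp continuous_snd).mul
    (continuous_finset_sum _ fun j _ =>
      ((entry_cont hG i j).comp continuous_fst).mul
        ((continuous_apply j).comp continuous_snd)))

private lemma quad_cont_t {n : ℕ} {G : ℝ → Matrix (Fin n) (Fin n) ℝ}
    (hG : Continuous G) (x y : Fin n → ℝ) :
    Continuous fun t => x ⬝ᵥ (G t) *ᵥ y := by
  simp only [dotProduct, mulVec]
  apply continuous_finset_sum
  intro i _
  exact (continuous_const.mul (continuous_finset_sum _ fun j _ =>
    (entry_cont hG i j).mul continuous_const))

private lemma unit_scale {n : ℕ} (y : Fin n → ℝ) (hy : y ≠ 0) :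
    ∃ u : Fin n → ℝ, u ⬝ᵥ u = 1 ∧ ∃ m : ℝ, 0 < m ∧
      ∀ M : Matrix (Fin n) (Fin n) ℝ, y ⬝ᵥ M *ᵥ y = m * (u ⬝ᵥ M *ᵥ u) := by
  have hm : 0 < y ⬝ᵥ y :=
    lt_of_le_of_ne (dp_self_nonneg y)
      (Ne.symm fun h => hy (dotProduct_self_eq_zero.mp h))
  set m := y ⬝ᵥ y with hmd
  set a := (Real.sqrt m)⁻¹ with ha
  have hsq : a * a = m⁻¹ := by
    rw [ha, ← mul_inv, Real.mul_self_sqrt hm.le]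
  refine ⟨a • y, ?_, m, hm, ?_⟩
  · rw [smul_dotProduct, dotProduct_smul, smul_eq_mul, smul_eq_mul,
      ← mul_assoc, hsq, ← hmd]
    exact inv_mul_cancel₀ hm.ne'
  · intro M
    rw [smul_dotProduct, Matrix.mulVec_smul, dotProduct_smul,
      smul_eq_mul, smul_eq_mul]
    have hre : m * (a * (a * (y ⬝ᵥ M *ᵥ y))) = (a * a) * (m * (y ⬝ᵥ M *ᵥ y)) := by ring
    rw [hre, hsq, inv_mul_cancel_left₀ hm.ne']

/-- If `Σ` solves `Σ̇ = AΣ + ΣAᵀ + CCᵀ + DDᵀ - KHKᵀ` with `K = (ΣEᵀ + CFᵀ)H⁻¹`,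
`H = FFᵀ`, and `Σ(0)` is positive semidefinite, then the right-hand side can be
rewritten as `(A - CF⁻¹E)Σ + Σ(A - CF⁻¹E)ᵀ - ΣEᵀH⁻¹EΣ + DDᵀ`, and `Σ(t)` is
positive semidefinite for all `t ∈ [0,T]`. -/
theorem stmt7 {n r p : ℕ} (T : ℝ) (hT : 0 < T)
    (A : ℝ → Matrix (Fin n) (Fin n) ℝ) (C : ℝ → Matrix (Fin n) (Fin r) ℝ)
    (D : ℝ → Matrix (Fin n) (Fin p) ℝ) (E : ℝ → Matrix (Fin r) (Fin n) ℝ)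
    (F : ℝ → Matrix (Fin r) (Fin r) ℝ)
    (hA : Continuous A) (hC : Continuous C) (hD : Continuous D)
    (hE : Continuous E) (hF : Continuous F)
    (hFinv : ∀ t, IsUnit (F t).det)
    (H : ℝ → Matrix (Fin r) (Fin r) ℝ) (hH : ∀ t, H t = F t * (F t)ᵀ)
    (Sg Sg' : ℝ → Matrix (Fin n) (Fin n) ℝ)
    (hSgsymm : ∀ t, (Sg t)ᵀ = Sg t)
    (hSgderiv : ∀ t, ∀ i j, HasDerivAt (fun s => Sg s i j) (Sg' t i j) t)
    (K : ℝ → Matrix (Fin n) (Fin r) ℝ)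
    (hK : ∀ t, K t = (Sg t * (E t)ᵀ + C t * (F t)ᵀ) * (H t)⁻¹)
    (hSgeq : ∀ t, Sg' t = A t * Sg t + Sg t * (A t)ᵀ + C t * (C t)ᵀ + D t * (D t)ᵀ
      - K t * H t * (K t)ᵀ)
    (hSg0 : (Sg 0).PosSemidef) :
    (∀ t, Sg' t = (A t - C t * (F t)⁻¹ * E t) * Sg t
        + Sg t * (A t - C t * (F t)⁻¹ * E t)ᵀ
        - Sg t * (E t)ᵀ * (H t)⁻¹ * E t * Sg t + D t * (D t)ᵀ) ∧
    (∀ t ∈ Set.Icc (0:ℝ) T, (Sg t).PosSemidef) := by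
  have hHsym : ∀ t, (H t)ᵀ = H t := fun t => by
    rw [hH t, Matrix.transpose_mul, Matrix.transpose_transpose]
  have hFtd : ∀ t, IsUnit (F t)ᵀ.det := fun t => by
    rw [Matrix.det_transpose]; exact hFinv t
  have hHd : ∀ t, IsUnit (H t).det := fun t => by
    rw [hH t, Matrix.det_mul, Matrix.det_transpose]; exact (hFinv t).mul (hFinv t)
  have hHinvsym : ∀ t, ((H t)⁻¹)ᵀ = (H t)⁻¹ := fun t => by
    rw [Matrix.transpose_nonsing_inv, hHsym t]
  -- Part 1 : the algebraic identity
  have key : ∀ t, Sg' t = (A t - C t * (F t)⁻¹ * E t) * Sg t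
      + Sg t * (A t - C t * (F t)⁻¹ * E t)ᵀ
      - Sg t * (E t)ᵀ * (H t)⁻¹ * E t * Sg t + D t * (D t)ᵀ := by
    intro t
    have hFd := hFinv t
    have hHinvH : (H t)⁻¹ * H t = 1 := Matrix.nonsing_inv_mul _ (hHd t)
    have hHinvF : (H t)⁻¹ * F t = ((F t)ᵀ)⁻¹ := by
      rw [hH t, Matrix.mul_inv_rev, Matrix.mul_assoc, Matrix.nonsing_inv_mul _ hFd,
        Matrix.mul_one]
    have hFtHinv : (F t)ᵀ * (H t)⁻¹ = (F t)⁻¹ := by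
      rw [hH t, Matrix.mul_inv_rev, ← Matrix.mul_assoc, Matrix.mul_nonsing_inv _ (hFtd t),
        Matrix.one_mul]
    have hKT : (K t)ᵀ = (H t)⁻¹ * (E t * Sg t + F t * (C t)ᵀ) := by
      rw [hK t, Matrix.transpose_mul, Matrix.transpose_nonsing_inv, hHsym t,
        Matrix.transpose_add, Matrix.transpose_mul, Matrix.transpose_mul,
        Matrix.transpose_transpose, Matrix.transpose_transpose, hSgsymm t]
    have hKHK : K t * H t * (K t)ᵀ
        = Sg t * (E t)ᵀ * (H t)⁻¹ * E t * Sg t + Sg t * ((E t)ᵀ * ((F t)ᵀ)⁻¹ * (C t)ᵀ)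
          + C t * (F t)⁻¹ * E t * Sg t + C t * (C t)ᵀ := by
      rw [hKT, hK t]
      have h1 : (Sg t * (E t)ᵀ + C t * (F t)ᵀ) * (H t)⁻¹ * H t
            * ((H t)⁻¹ * (E t * Sg t + F t * (C t)ᵀ))
          = (Sg t * (E t)ᵀ + C t * (F t)ᵀ) * ((H t)⁻¹ * (E t * Sg t + F t * (C t)ᵀ)) := by
        rw [Matrix.mul_assoc _ _ (H t), hHinvH, Matrix.mul_one]
      rw [h1, Matrix.add_mul]
      simp only [Matrix.mul_add]
      have e1 : Sg t * (E t)ᵀ * ((H t)⁻¹ * (E t * Sg t))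
          = Sg t * (E t)ᵀ * (H t)⁻¹ * E t * Sg t := by
        simp only [Matrix.mul_assoc]
      have e2 : Sg t * (E t)ᵀ * ((H t)⁻¹ * (F t * (C t)ᵀ))
          = Sg t * ((E t)ᵀ * ((F t)ᵀ)⁻¹ * (C t)ᵀ) := by
        rw [← Matrix.mul_assoc ((H t)⁻¹), hHinvF]
        simp only [Matrix.mul_assoc]
      have e3 : C t * (F t)ᵀ * ((H t)⁻¹ * (E t * Sg t)) = C t * (F t)⁻¹ * E t * Sg t := by
        rw [← Matrix.mul_assoc, Matrix.mul_assoc (C t), hFtHinv]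
        simp only [Matrix.mul_assoc]
      have e4 : C t * (F t)ᵀ * ((H t)⁻¹ * (F t * (C t)ᵀ)) = C t * (C t)ᵀ := by
        rw [← Matrix.mul_assoc, Matrix.mul_assoc (C t), hFtHinv, Matrix.mul_assoc,
          ← Matrix.mul_assoc ((F t)⁻¹), Matrix.nonsing_inv_mul _ hFd, Matrix.one_mul]
      rw [e1, e2, e3, e4]
      abel
    rw [hSgeq t, hKHK]
    have hNT : (A t - C t * (F t)⁻¹ * E t)ᵀ
        = (A t)ᵀ - (E t)ᵀ * (((F t)ᵀ)⁻¹ * (C t)ᵀ) := by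
      rw [Matrix.transpose_sub, Matrix.transpose_mul, Matrix.transpose_mul,
        Matrix.transpose_nonsing_inv]
    rw [hNT, Matrix.sub_mul, Matrix.mul_sub]
    simp only [Matrix.mul_assoc]
    abel
  refine ⟨key, ?_⟩
  -- continuity facts
  have hSgCont : Continuous Sg :=
    continuous_matrix fun i j =>
      continuous_iff_continuousAt.2 fun t => (hSgderiv t i j).continuousAt
  have hdetFne : ∀ t, (F t).det ≠ 0 := fun t => (hFinv t).ne_zero
  have hFinvCont : Continuous fun t => (F t)⁻¹ := by
    simp only [Matrix.inv_def, Ring.inverse_eq_inv]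
    exact (hF.matrix_det.inv₀ hdetFne).smul hF.matrix_adjugate
  have hHc : Continuous H := by
    rw [show H = fun t => F t * (F t)ᵀ from funext hH]
    exact hF.matrix_mul hF.matrix_transpose
  have hdetHne : ∀ t, (H t).det ≠ 0 := fun t => (hHd t).ne_zero
  have hHinvCont : Continuous fun t => (H t)⁻¹ := by
    simp only [Matrix.inv_def, Ring.inverse_eq_inv]
    exact (hHc.matrix_det.inv₀ hdetHne).smul hHc.matrix_adjugate
  set M : ℝ → Matrix (Fin n) (Fin n) ℝ :=
    fun t => A t - C t * (F t)⁻¹ * E t - Sg t * (E t)ᵀ * (H t)⁻¹ * E t with hM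
  have hMc : Continuous M := by
    apply Continuous.sub
    · exact hA.sub ((hC.matrix_mul hFinvCont).matrix_mul hE)
    · exact ((hSgCont.matrix_mul hE.matrix_transpose).matrix_mul hHinvCont).matrix_mul hE
  -- the unit sphere for the dot product
  set Sph : Set (Fin n → ℝ) := {x | x ⬝ᵥ x = 1} with hSphdef
  have hdotc : Continuous fun x : Fin n → ℝ => x ⬝ᵥ x :=
    continuous_finset_sum _ fun i _ => (continuous_apply i).mul (continuous_apply i)
  have hSphClosed : IsClosed Sph := isClosed_eq hdotc continuous_const
  have hSphSub : Sph ⊆ Metric.closedBall 0 1 := by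
    intro x hx
    rw [Metric.mem_closedBall, dist_zero_right]
    rw [pi_norm_le_iff_of_nonneg zero_le_one]
    intro i
    rw [Real.norm_eq_abs, abs_le_one_iff_mul_self_le_one]
    calc x i * x i ≤ x ⬝ᵥ x :=
          Finset.single_le_sum (fun j _ => mul_self_nonneg (x j)) (Finset.mem_univ i)
      _ = 1 := hx
  have hSphCompact : IsCompact Sph :=
    (isCompact_closedBall (0 : Fin n → ℝ) 1).of_isClosed_subset hSphClosed hSphSub
  -- uniform bound for the quadratic form of M on [0,T] × Sph
  obtain ⟨c₁, hc₁⟩ :=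
    ((isCompact_Icc : IsCompact (Icc (0:ℝ) T)).prod hSphCompact).exists_bound_of_continuousOn
      (quad_cont_joint hMc).continuousOn
  set c : ℝ := 2 * c₁ + 1 with hc
  -- perturbed matrices
  set Sε : ℝ → ℝ → Matrix (Fin n) (Fin n) ℝ :=
    fun ε t => Sg t + (ε * Real.exp (c * t)) • (1 : Matrix (Fin n) (Fin n) ℝ) with hSεdef
  have hSεform : ∀ ε t x, x ⬝ᵥ (Sε ε t) *ᵥ x
      = x ⬝ᵥ (Sg t) *ᵥ x + ε * Real.exp (c * t) * (x ⬝ᵥ x) := by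
    intro ε t x
    simp [hSεdef, Matrix.add_mulVec, Matrix.smul_mulVec, Matrix.one_mulVec,
      dotProduct_add, dotProduct_smul, smul_eq_mul]
  have hSεCont : ∀ ε, Continuous (Sε ε) := by
    intro ε
    exact hSgCont.add
      ((continuous_const.mul ((continuous_const.mul continuous_id).rexp)).smul continuous_const)
  -- main positivity claim for the perturbed matrices
  have main : ∀ ε, 0 < ε → ∀ t ∈ Icc (0:ℝ) T, ∀ x ∈ Sph, 0 < x ⬝ᵥ (Sε ε t) *ᵥ x := by
    intro ε hε
    by_contra hcon
    push_neg at hcon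
    obtain ⟨tb, htb, xb, hxb, hqb⟩ := hcon
    set P : Set (ℝ × (Fin n → ℝ)) :=
      {z | z.1 ∈ Icc (0:ℝ) T ∧ z.2 ∈ Sph ∧ z.2 ⬝ᵥ (Sε ε z.1) *ᵥ z.2 ≤ 0} with hPdef
    have hPclosed : IsClosed P := by
      have h1 : IsClosed {z : ℝ × (Fin n → ℝ) | z.1 ∈ Icc (0:ℝ) T} :=
        isClosed_Icc.preimage continuous_fst
      have h2 : IsClosed {z : ℝ × (Fin n → ℝ) | z.2 ∈ Sph} :=
        hSphClosed.preimage continuous_snd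
      have h3 : IsClosed {z : ℝ × (Fin n → ℝ) | z.2 ⬝ᵥ (Sε ε z.1) *ᵥ z.2 ≤ 0} :=
        isClosed_le (quad_cont_joint (hSεCont ε)) continuous_const
      exact (h1.inter (h2.inter h3))
    have hPcomp : IsCompact P := by
      apply (((isCompact_Icc : IsCompact (Icc (0:ℝ) T)).prod hSphCompact)).of_isClosed_subset
        hPclosed
      intro z hz
      exact ⟨hz.1, hz.2.1⟩
    set B := Prod.fst '' P with hBdef
    have hBcomp : IsCompact B := hPcomp.image continuous_fst
    have hBne : B.Nonempty := ⟨tb, ⟨tb, xb⟩, ⟨htb, hxb, hqb⟩, rfl⟩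
    have hmem := hBcomp.sInf_mem hBne
    obtain ⟨z₀, hz₀P, hz₀⟩ := hmem
    obtain ⟨ht₀Icc, hx₀Sph, hq₀le⟩ := hz₀P
    set t₀ := z₀.1 with ht₀def
    set x₀ := z₀.2 with hx₀def
    have hlow : ∀ s ∈ B, t₀ ≤ s := by
      intro s hs
      rw [hz₀]
      exact csInf_le hBcomp.bddBelow hs
    have hpos : ∀ s, 0 ≤ s → s < t₀ → ∀ y ∈ Sph, 0 < y ⬝ᵥ (Sε ε s) *ᵥ y := by
      intro s hs0 hst y hy
      by_contra hle
      push_neg at hle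
      have hsB : s ∈ B := ⟨(s, y), ⟨⟨hs0, hst.le.trans ht₀Icc.2⟩, hy, hle⟩, rfl⟩
      exact absurd (hlow s hsB) (not_le.mpr hst)
    have ht₀pos : 0 < t₀ := by
      rcases ht₀Icc.1.lt_or_eq with h | h
      · exact h
      · exfalso
        rw [← h] at hq₀le
        rw [hSεform] at hq₀le
        have h1 : 0 ≤ x₀ ⬝ᵥ (Sg 0) *ᵥ x₀ := by simpa using hSg0.dotProduct_mulVec_nonneg x₀
        have h2 : x₀ ⬝ᵥ x₀ = 1 := hx₀Sph
        rw [h2, mul_zero, Real.exp_zero] at hq₀le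
        linarith
    have hpsd0 : ∀ y, 0 ≤ y ⬝ᵥ (Sε ε t₀) *ᵥ y := by
      intro y
      rcases eq_or_ne y 0 with rfl | hy
      · simp
      · obtain ⟨u, hu1, m, hm, hscale⟩ := unit_scale y hy
        have hg : Continuous fun s => y ⬝ᵥ (Sε ε s) *ᵥ y := quad_cont_t (hSεCont ε) y y
        have hev : ∀ᶠ s in 𝓝[<] t₀, 0 ≤ y ⬝ᵥ (Sε ε s) *ᵥ y := by
          filter_upwards [Ioo_mem_nhdsLT ht₀pos] with s hs
          rw [hscale (Sε ε s)]
          exact le_of_lt (mul_pos hm (hpos s hs.1.le hs.2 u hu1))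
        exact ge_of_tendsto (hg.continuousAt.tendsto.mono_left nhdsWithin_le_nhds) hev
    have hq₀ : x₀ ⬝ᵥ (Sε ε t₀) *ᵥ x₀ = 0 := le_antisymm hq₀le (hpsd0 x₀)
    have hsymSε : (Sε ε t₀)ᵀ = Sε ε t₀ := by
      simp [hSεdef, Matrix.transpose_add, Matrix.transpose_smul, Matrix.transpose_one,
        hSgsymm t₀]
    have hker : (Sε ε t₀) *ᵥ x₀ = 0 := psd_kernel _ hsymSε hpsd0 x₀ hq₀
    set δ : ℝ := ε * Real.exp (c * t₀) with hδdef
    have hδ : 0 < δ := mul_pos hε (Real.exp_pos _)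
    have hSgx : Sg t₀ *ᵥ x₀ = (-δ) • x₀ := by
      have h := hker
      rw [hSεdef] at h
      simp only [Matrix.add_mulVec, Matrix.smul_mulVec, Matrix.one_mulVec] at h
      have := add_eq_zero_iff_eq_neg.mp h
      rw [this, ← hδdef, neg_smul]
    -- the function f and its derivative at t₀
    set f : ℝ → ℝ := fun s => x₀ ⬝ᵥ (Sg s) *ᵥ x₀ + ε * Real.exp (c * s) * (x₀ ⬝ᵥ x₀)
      with hfdef
    have hfq : ∀ s, f s = x₀ ⬝ᵥ (Sε ε s) *ᵥ x₀ := fun s => (hSεform ε s x₀).symm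
    set d : ℝ := x₀ ⬝ᵥ (Sg' t₀) *ᵥ x₀ + ε * (Real.exp (c * t₀) * c) * (x₀ ⬝ᵥ x₀) with hddef
    have hfderiv : HasDerivAt f d t₀ := by
      apply HasDerivAt.add
      · exact hasDerivAt_quadform Sg Sg' t₀ (fun i j => hSgderiv t₀ i j) x₀ x₀
      · have h1 : HasDerivAt (fun s : ℝ => c * s) c t₀ := by
          simpa using (hasDerivAt_id t₀).const_mul c
        exact ((h1.exp).const_mul ε).mul_const _
    -- d ≤ 0 since f is positive left of t₀ and vanishes at t₀
    have hdle : d ≤ 0 := by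
      have hslope := hasDerivAt_iff_tendsto_slope.mp hfderiv
      have hslope' : Tendsto (slope f t₀) (𝓝[<] t₀) (𝓝 d) :=
        hslope.mono_left (nhdsWithin_mono _ fun s hs => ne_of_lt hs)
      apply le_of_tendsto hslope'
      filter_upwards [Ioo_mem_nhdsLT ht₀pos] with s hs
      have hfs : 0 < f s := by
        rw [hfq s]; exact hpos s hs.1.le hs.2 x₀ hx₀Sph
      have hft₀ : f t₀ = 0 := by rw [hfq t₀]; exact hq₀
      rw [slope_def_field]
      apply div_nonpos_iff.mpr
      left
      constructor <;> [skip; linarith [hs.2]]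
      rw [hft₀]; linarith
    -- now show d > 0, contradiction
    have hSg'alt : Sg' t₀ = M t₀ * Sg t₀ + Sg t₀ * (M t₀)ᵀ
        + Sg t₀ * (E t₀)ᵀ * ((H t₀)⁻¹ * (E t₀ * Sg t₀)) + D t₀ * (D t₀)ᵀ := by
      rw [key t₀, hM]
      simp only [Matrix.transpose_sub, Matrix.transpose_mul, Matrix.transpose_transpose,
        hHinvsym t₀, hSgsymm t₀, Matrix.sub_mul, Matrix.mul_sub]
      simp only [Matrix.mul_assoc]
      abel
    have hθ : |x₀ ⬝ᵥ (M t₀) *ᵥ x₀| ≤ c₁ := by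
      have := hc₁ z₀ (Set.mem_prod.mpr ⟨ht₀Icc, hx₀Sph⟩)
      simpa [Real.norm_eq_abs] using this
    have term1 : x₀ ⬝ᵥ (M t₀ * Sg t₀) *ᵥ x₀ = -(δ * (x₀ ⬝ᵥ (M t₀) *ᵥ x₀)) := by
      rw [← Matrix.mulVec_mulVec, hSgx, Matrix.mulVec_smul, dotProduct_smul,
        smul_eq_mul]
      ring
    have term2 : x₀ ⬝ᵥ (Sg t₀ * (M t₀)ᵀ) *ᵥ x₀ = -(δ * (x₀ ⬝ᵥ (M t₀) *ᵥ x₀)) := by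
      rw [← Matrix.mulVec_mulVec, Matrix.dotProduct_mulVec, ← Matrix.mulVec_transpose,
        hSgsymm t₀, hSgx, smul_dotProduct, smul_eq_mul,
        Matrix.mulVec_transpose, dotProduct_comm, ← Matrix.dotProduct_mulVec]
      ring
    have hPT : (Sg t₀ * (E t₀)ᵀ)ᵀ = E t₀ * Sg t₀ := by
      rw [Matrix.transpose_mul, Matrix.transpose_transpose, hSgsymm t₀]
    have term3 : 0 ≤ x₀ ⬝ᵥ (Sg t₀ * (E t₀)ᵀ * ((H t₀)⁻¹ * (E t₀ * Sg t₀))) *ᵥ x₀ := by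
      have hHfact : (H t₀)⁻¹ = ((F t₀)⁻¹)ᵀ * (F t₀)⁻¹ := by
        rw [hH t₀, Matrix.mul_inv_rev, Matrix.transpose_nonsing_inv]
      set w : Fin r → ℝ := (E t₀ * Sg t₀) *ᵥ x₀ with hw
      have h1 : x₀ ⬝ᵥ (Sg t₀ * (E t₀)ᵀ * ((H t₀)⁻¹ * (E t₀ * Sg t₀))) *ᵥ x₀
          = w ⬝ᵥ (H t₀)⁻¹ *ᵥ w := by
        rw [← Matrix.mulVec_mulVec x₀ (Sg t₀ * (E t₀)ᵀ) ((H t₀)⁻¹ * (E t₀ * Sg t₀)),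
          ← Matrix.mulVec_mulVec x₀ ((H t₀)⁻¹) (E t₀ * Sg t₀),
          Matrix.dotProduct_mulVec x₀ (Sg t₀ * (E t₀)ᵀ),
          ← Matrix.mulVec_transpose, hPT, ← hw]
      rw [h1, hHfact, ← Matrix.mulVec_mulVec, Matrix.dotProduct_mulVec,
        Matrix.vecMul_transpose]
      exact dp_self_nonneg _
    have term4 : 0 ≤ x₀ ⬝ᵥ (D t₀ * (D t₀)ᵀ) *ᵥ x₀ := by
      rw [← Matrix.mulVec_mulVec, Matrix.dotProduct_mulVec, ← Matrix.mulVec_transpose]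
      exact dp_self_nonneg _
    have hx1 : x₀ ⬝ᵥ x₀ = 1 := hx₀Sph
    have hquad : x₀ ⬝ᵥ (Sg' t₀) *ᵥ x₀
        = -(δ * (x₀ ⬝ᵥ (M t₀) *ᵥ x₀)) + -(δ * (x₀ ⬝ᵥ (M t₀) *ᵥ x₀))
          + (x₀ ⬝ᵥ (Sg t₀ * (E t₀)ᵀ * ((H t₀)⁻¹ * (E t₀ * Sg t₀))) *ᵥ x₀)
          + (x₀ ⬝ᵥ (D t₀ * (D t₀)ᵀ) *ᵥ x₀) := by
      rw [hSg'alt]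
      simp only [Matrix.add_mulVec, dotProduct_add]
      rw [term1, term2]
    have habs := abs_le.mp hθ
    have e1 : δ * (x₀ ⬝ᵥ (M t₀) *ᵥ x₀) ≤ δ * c₁ :=
      mul_le_mul_of_nonneg_left habs.2 hδ.le
    have e2 : ε * (Real.exp (c * t₀) * c) * (x₀ ⬝ᵥ x₀) = 2 * (δ * c₁) + δ := by
      rw [hx1, hδdef, hc]; ring
    have hdpos : 0 < d := by
      rw [hddef, hquad, e2]
      linarith
    exact absurd hdpos (not_lt.mpr hdle)
  -- conclude positive semidefiniteness on [0,T]
  intro t ht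
  refine PosSemidef.of_dotProduct_mulVec_nonneg ?_ ?_
  · show (Sg t)ᴴ = Sg t
    ext i j
    rw [Matrix.conjTranspose_apply, star_trivial]
    exact congrFun (congrFun (hSgsymm t) i) j
  · intro x
    rw [star_trivial]
    rcases eq_or_ne x 0 with rfl | hx
    · simp
    · obtain ⟨u, hu1, m, hm, hscale⟩ := unit_scale x hx
      rw [hscale (Sg t)]
      apply mul_nonneg hm.le
      set v := u ⬝ᵥ (Sg t) *ᵥ u with hv
      by_contra hneg
      push_neg at hneg
      have he := Real.exp_pos (c * t)
      have hεx : 0 < -v / (2 * Real.exp (c * t)) :=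
        div_pos (neg_pos.mpr hneg) (by positivity)
      have hmain := main _ hεx t ht u hu1
      rw [hSεform, hu1, mul_one] at hmain
      have hval : -v / (2 * Real.exp (c * t)) * Real.exp (c * t) = -v / 2 := by
        field_simp
      rw [← hv] at hmain
      linarith
end
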